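/- arXiv:1711.08816 — 4 statements merged into one kernel-verified Lean document; each statement's English description precedes it below -/
import Mathlib

section
/- Let M be a loopless matroid on a linearly ordered ground set E. A subset I of E is an nbc-set (contains no broken circuit) if and only if for every element x of I, x is the minimum element of the closure of the set {y ∈ I : y ≥ x}. -/
set_option maxHeartbeats 1000000

open scoped Classical

/-- A circuit of a matroid: a minimal dependent set. -/
def Matroid.IsCircuitF {α : Type*} (M : Matroid α) (C : Finset α) : Prop :=
  M.Dep ↑C ∧ ∀ D ⊂ C, M.Indep ↑D

/-- A broken circuit: a circuit with its minimum element removed. -/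
def Matroid.BrokenCircuit {α : Type*} [LinearOrder α] (M : Matroid α) (B : Finset α) : Prop :=
  ∃ C : Finset α, M.IsCircuitF C ∧ ∃ h : C.Nonempty, B = C.erase (C.min' h)

/-- An nbc-set: a set containing no broken circuit. -/
def Matroid.NbcSet {α : Type*} [LinearOrder α] (M : Matroid α) (I : Finset α) : Prop :=
  ∀ B : Finset α, M.BrokenCircuit B → ¬ B ⊆ I

/-- The rank of a set in a matroid: the largest size of an independent subset. -/
noncomputable def Matroid.mrk {α : Type*} (M : Matroid α) (X : Set α) : ℕ :=
  sSup {n | ∃ I : Finset α, M.Indep ↑I ∧ ↑I ⊆ X ∧ I.card = n}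

lemma exists_circuitF_subset {α : Type*} [Fintype α] (M : Matroid α) (hE : M.E = Set.univ)
    (C₀ : Finset α) (hdep : M.Dep ↑C₀) : ∃ C ⊆ C₀, M.IsCircuitF C := by
  classical
  have hne : (Finset.univ.filter (fun D : Finset α => M.Dep ↑D ∧ D ⊆ C₀)).Nonempty :=
    ⟨C₀, by simp [hdep]⟩
  obtain ⟨C, hCmem, hCmin⟩ := Finset.exists_min_image _ Finset.card hne
  simp only [Finset.mem_filter, Finset.mem_univ, true_and] at hCmem
  refine ⟨C, hCmem.2, hCmem.1, fun D hD => ?_⟩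
  by_contra hind
  have hDdep : M.Dep ↑D := by
    rw [M.dep_iff]
    exact ⟨hind, by rw [hE]; exact Set.subset_univ _⟩
  have := hCmin D (by simp [hDdep, hD.subset.trans hCmem.2])
  exact absurd (Finset.card_lt_card hD) (not_lt.2 this)

lemma exists_circuitF_of_mem_closure {α : Type*} [Fintype α] (M : Matroid α)
    (hE : M.E = Set.univ) {S : Set α} {z : α} (hz : z ∈ M.closure S) (hzS : z ∉ S) :
    ∃ C : Finset α, M.IsCircuitF C ∧ z ∈ C ∧ ↑C ⊆ insert z S := by
  classical
  have hSE : S ⊆ M.E := by rw [hE]; exact Set.subset_univ _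
  obtain ⟨B, hB⟩ := M.exists_isBasis S hSE
  have hzB : z ∈ M.closure B := by rw [hB.closure_eq_closure]; exact hz
  have hzB' : z ∉ B := fun h => hzS (hB.subset h)
  have hdep : M.Dep (insert z B) := hB.indep.insert_dep_iff.2 ⟨hzB, hzB'⟩
  have hBfin : B.Finite := Set.toFinite B
  set C₀ : Finset α := insert z hBfin.toFinset with hC₀
  have hC₀coe : (↑C₀ : Set α) = insert z B := by
    simp only [hC₀, Finset.coe_insert, Set.Finite.coe_toFinset]
  obtain ⟨C, hCsub, hC⟩ := exists_circuitF_subset M hE C₀ (by rw [hC₀coe]; exact hdep)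
  have hzC : z ∈ C := by
    by_contra hzC
    have : (↑C : Set α) ⊆ B := by
      intro a ha
      have : a ∈ (↑C₀ : Set α) := hCsub ha
      rw [hC₀coe] at this
      rcases this with rfl | h
      · exact absurd ha hzC
      · exact h
    exact hC.1.not_indep (hB.indep.subset this)
  refine ⟨C, hC, hzC, ?_⟩
  intro a ha
  have : a ∈ (↑C₀ : Set α) := hCsub ha
  rw [hC₀coe] at this
  exact this.imp_right (fun h => hB.subset h)

lemma circuitF_mem_closure_erase {α : Type*} [DecidableEq α] (M : Matroid α) {C : Finset α}
    (hC : M.IsCircuitF C) {e : α} (he : e ∈ C) : e ∈ M.closure ↑(C.erase e) := by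
  classical
  have hind : M.Indep ↑(C.erase e) := hC.2 _ (Finset.erase_ssubset he)
  have hne : e ∉ (↑(C.erase e) : Set α) := by simp
  have hdep : M.Dep (insert e ↑(C.erase e)) := by
    have : (insert e ↑(C.erase e) : Set α) = ↑C := by
      rw [← Finset.coe_insert, Finset.insert_erase he]
    rw [this]; exact hC.1
  exact (hind.insert_dep_iff.1 hdep).1

/-- A subset `I` is an nbc-set iff every `x ∈ I` is the minimum element of the
closure of `{y ∈ I : y ≥ x}`. -/
theorem stmt_0 {α : Type*} [Fintype α] [LinearOrder α] (M : Matroid α)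
    (hE : M.E = Set.univ) (hLoopless : ∀ e : α, M.Indep {e}) (I : Finset α) :
    M.NbcSet I ↔ ∀ x ∈ I, IsLeast (M.closure {y | y ∈ I ∧ x ≤ y}) x := by
  constructor
  · intro hnbc x hx
    set S : Set α := {y | y ∈ I ∧ x ≤ y} with hS
    constructor
    · exact M.mem_closure_of_mem' ⟨hx, le_refl x⟩ (by rw [hE]; trivial)
    · intro z hz
      by_contra hlt
      push_neg at hlt
      have hzS : z ∉ S := fun h => absurd h.2 (not_le.2 hlt)
      obtain ⟨C, hC, hzC, hCsub⟩ := exists_circuitF_of_mem_closure M hE hz hzS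
      have hCne : C.Nonempty := ⟨z, hzC⟩
      have hmin : C.min' hCne = z := by
        apply le_antisymm (C.min'_le z hzC)
        apply Finset.le_min'
        intro y hy
        rcases hCsub hy with rfl | h
        · exact le_refl _
        · exact le_of_lt (lt_of_lt_of_le hlt h.2)
      refine hnbc (C.erase (C.min' hCne)) ⟨C, hC, hCne, rfl⟩ ?_
      intro b hb
      rw [hmin] at hb
      rcases hCsub (Finset.mem_of_mem_erase hb) with rfl | h
      · exact absurd rfl (Finset.ne_of_mem_erase hb)
      · exact h.1
  · intro hmin B hB hBI
    obtain ⟨C, hC, hCne, rfl⟩ := hB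
    set m := C.min' hCne with hm
    have hCcard : 2 ≤ C.card := by
      by_contra h
      push_neg at h
      interval_cases hc : C.card
      · exact absurd (Finset.card_eq_zero.1 hc ▸ hCne) (by simp)
      · obtain ⟨a, rfl⟩ := Finset.card_eq_one.1 hc
        exact hC.1.not_indep (by simpa using hLoopless a)
    have hBne : (C.erase m).Nonempty := by
      rw [← Finset.card_pos, Finset.card_erase_of_mem (C.min'_mem hCne)]
      omega
    set x := (C.erase m).min' hBne with hxdef
    have hxB : x ∈ C.erase m := Finset.min'_mem _ _
    have hxI : x ∈ I := hBI hxB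
    have hmcl : m ∈ M.closure ↑(C.erase m) := circuitF_mem_closure_erase M hC (C.min'_mem hCne)
    have hsub : (↑(C.erase m) : Set α) ⊆ {y | y ∈ I ∧ x ≤ y} := by
      intro b hb
      exact ⟨hBI hb, Finset.min'_le _ b hb⟩
    have hmcl' : m ∈ M.closure {y | y ∈ I ∧ x ≤ y} := M.closure_subset_closure hsub hmcl
    have hxm : x ≤ m := (hmin x hxI).2 hmcl'
    have hmx : m < x := lt_of_le_of_ne (C.min'_le x (Finset.mem_of_mem_erase hxB))
      (Ne.symm (Finset.ne_of_mem_erase hxB))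
    exact absurd hxm (not_le.2 hmx)
end

section
/- For a loopless matroid M of rank r on a linearly ordered ground set and any flat X of M, the number (-1)^{rk(X)} μ(∅̂, X), where μ is the Möbius function of the lattice of flats, equals the number of nbc-sets whose closure is X. Consequently, the k-th Whitney number of the first kind (unsigned), i.e. (-1)^k times the coefficient of λ^{r-k} in the characteristic polynomial χ(M;λ) = Σ_{X flat} μ(∅̂,X) λ^{r - rk(X)}, equals the number of nbc-sets of size k. -/
open scoped Classical

lemma exists_circuit {α : Type*} [LinearOrder α] (M : Matroid α) (D : Finset α) (hD : M.Dep ↑D) :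
    ∃ C ⊆ D, M.IsCircuitF C := by
  induction D using Finset.strongInductionOn with
  | _ D ih =>
    by_cases h : ∀ D' ⊂ D, M.Indep ↑D'
    · exact ⟨D, subset_rfl, hD, h⟩
    · push_neg at h
      obtain ⟨D', hD'sub, hD'dep⟩ := h
      have : M.Dep ↑D' := by
        rw [Matroid.dep_iff]
        exact ⟨hD'dep, (Finset.coe_subset.mpr hD'sub.subset).trans hD.subset_ground⟩
      obtain ⟨C, hCD', hC⟩ := ih D' hD'sub this
      exact ⟨C, hCD'.trans hD'sub.subset, hC⟩

lemma nbc_indep {α : Type*} [LinearOrder α] (M : Matroid α) (hE : M.E = Set.univ)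
    {I : Finset α} (hI : M.NbcSet I) : M.Indep ↑I := by
  by_contra h
  have hIE : (↑I : Set α) ⊆ M.E := by rw [hE]; exact Set.subset_univ _
  obtain ⟨C, hCI, hC⟩ := exists_circuit M I (Matroid.dep_iff.mpr ⟨h, hIE⟩)
  have hCne : C.Nonempty := by
    rcases C.eq_empty_or_nonempty with rfl | h'
    · exact absurd M.empty_indep (by simpa using hC.1.not_indep)
    · exact h'
  exact hI _ ⟨C, hC, hCne, rfl⟩ ((C.erase_subset _).trans hCI)

lemma circuit_min_mem_closure {α : Type*} [LinearOrder α] (M : Matroid α) {C : Finset α}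
    (hC : M.IsCircuitF C) {x : α} (hx : x ∈ C) : x ∈ M.closure ↑(C.erase x) := by
  have herase : M.Indep ↑(C.erase x) := hC.2 _ (Finset.erase_ssubset hx)
  have : M.Dep (insert x ↑(C.erase x)) := by
    have h : (insert x ↑(C.erase x) : Set α) = ↑C := by
      rw [← Finset.coe_insert, Finset.insert_erase hx]
    rw [h]; exact hC.1
  exact herase.mem_closure_iff.mpr (Or.inl this)

lemma nbc_mono {α : Type*} [LinearOrder α] (M : Matroid α) {I J : Finset α}
    (hJ : M.NbcSet J) (hIJ : I ⊆ J) : M.NbcSet I :=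
  fun B hB hBI => hJ B hB (hBI.trans hIJ)

lemma nbc_empty {α : Type*} [LinearOrder α] (M : Matroid α)
    (hLoopless : ∀ e : α, M.Indep {e}) : M.NbcSet ∅ := by
  rintro B ⟨C, hC, hCne, rfl⟩ hB
  rw [Finset.subset_empty, Finset.erase_eq_empty_iff] at hB
  rcases hB with rfl | hB
  · exact absurd rfl (Finset.nonempty_iff_ne_empty.mp hCne)
  · rw [hB] at hC
    exact hC.1.not_indep (by simpa using hLoopless (C.min' hCne))

lemma cardA {α : Type*} [LinearOrder α] (M : Matroid α) {I J : Finset α} (hI : M.Indep ↑I)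
    (hJ : M.Indep ↑J) (hJc : (↑J : Set α) ⊆ M.closure ↑I) : J.card ≤ I.card := by
  have hIb : (M.restrict (M.closure ↑I)).IsBase ↑I := (hI.isBasis_closure).isBase_restrict
  have hJ' : (M.restrict (M.closure ↑I)).Indep ↑J := Matroid.restrict_indep_iff.mpr ⟨hJ, hJc⟩
  obtain ⟨B, hB, hJB⟩ := hJ'.exists_isBase_superset
  have hcard := hB.encard_eq_encard_of_isBase hIb
  have h1 : (↑J : Set α).encard ≤ B.encard := Set.encard_le_encard hJB
  rw [hcard] at h1
  rw [Set.encard_coe_eq_coe_finsetCard, Set.encard_coe_eq_coe_finsetCard] at h1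
  exact_mod_cast h1

lemma mrkB {α : Type*} [Fintype α] [LinearOrder α] (M : Matroid α) (hE : M.E = Set.univ)
    {I : Finset α} (hI : M.Indep ↑I) {X : Set α} (hX : M.closure ↑I = X) :
    M.mrk X = I.card := by
  apply IsGreatest.csSup_eq
  constructor
  · exact ⟨I, hI, by
      rw [← hX]; exact M.subset_closure ↑I (by rw [hE]; exact Set.subset_univ _), rfl⟩
  · rintro n ⟨J, hJ, hJX, rfl⟩
    exact cardA M hI hJ (by rw [hX]; exact hJX)

lemma nbc_insert_min {α : Type*} [LinearOrder α] (M : Matroid α) {X : Finset α}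
    (hX : M.IsFlat ↑X) (hne : X.Nonempty) {I : Finset α} (hIX : I ⊆ X)
    (hI : M.NbcSet I) : M.NbcSet (insert (X.min' hne) I) := by
  rintro B ⟨C, hC, hCne, rfl⟩ hBsub
  by_cases heB : X.min' hne ∈ C.erase (C.min' hCne)
  · have hBX : C.erase (C.min' hCne) ⊆ X :=
      hBsub.trans (Finset.insert_subset (Finset.min'_mem X hne) hIX)
    have h1 : C.min' hCne ∈ M.closure ↑(C.erase (C.min' hCne)) :=
      circuit_min_mem_closure M hC (C.min'_mem hCne)
    have h2 : M.closure ↑(C.erase (C.min' hCne)) ⊆ M.closure ↑X :=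
      M.closure_subset_closure (Finset.coe_subset.mpr hBX)
    rw [hX.closure] at h2
    have hmX : C.min' hCne ∈ X := h2 h1
    have hme : C.min' hCne ≠ X.min' hne :=
      fun h => (Finset.notMem_erase (C.min' hCne) C) (h ▸ heB)
    have hmle : C.min' hCne ≤ X.min' hne := C.min'_le _ (Finset.mem_of_mem_erase heB)
    exact hme (le_antisymm hmle (X.min'_le _ hmX))
  · refine hI _ ⟨C, hC, hCne, rfl⟩ (fun x hx => ?_)
    rcases Finset.mem_insert.mp (hBsub hx) with h | h
    · exact absurd (h ▸ hx) heB
    · exact h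

lemma sum_identity {α : Type*} [Fintype α] [LinearOrder α] (M : Matroid α)
    (hLoopless : ∀ e : α, M.Indep {e}) {X : Finset α} (hX : M.IsFlat ↑X) :
    (∑ I ∈ Finset.univ.filter (fun I : Finset α => M.NbcSet I ∧ I ⊆ X), (-1 : ℤ) ^ I.card)
      = if X = ∅ then 1 else 0 := by
  rcases X.eq_empty_or_nonempty with rfl | hne
  · rw [if_pos rfl]
    have : Finset.univ.filter (fun I : Finset α => M.NbcSet I ∧ I ⊆ (∅ : Finset α)) = {∅} := by
      ext I
      simp only [Finset.mem_filter, Finset.mem_univ, true_and, Finset.mem_singleton,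
        Finset.subset_empty]
      constructor
      · rintro ⟨_, rfl⟩; rfl
      · rintro rfl; exact ⟨nbc_empty M hLoopless, rfl⟩
    rw [this]; simp
  · rw [if_neg (Finset.nonempty_iff_ne_empty.mp hne)]
    set e := X.min' hne with he
    set s := Finset.univ.filter (fun I : Finset α => M.NbcSet I ∧ I ⊆ X) with hs
    have hmem : ∀ I ∈ s, M.NbcSet I ∧ I ⊆ X := by
      intro I hI; simpa [hs] using hI
    have hmem' : ∀ I : Finset α, M.NbcSet I → I ⊆ X → I ∈ s := by
      intro I h1 h2; simp [hs, h1, h2]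
    set g : ∀ I : Finset α, I ∈ s → Finset α :=
      fun I _ => if e ∈ I then I.erase e else insert e I with hg
    have hcancel : ∀ (I : Finset α) (hI : I ∈ s),
        (-1 : ℤ) ^ I.card + (-1 : ℤ) ^ (g I hI).card = 0 := by
      intro I hI
      by_cases heI : e ∈ I
      · have : g I hI = I.erase e := if_pos heI
        rw [this, Finset.card_erase_of_mem heI]
        obtain ⟨n, hn⟩ : ∃ n, I.card = n + 1 :=
          ⟨I.card - 1, (Nat.succ_pred_eq_of_pos (Finset.card_pos.mpr ⟨e, heI⟩)).symm⟩
        rw [hn]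
        simp [pow_succ]
      · have : g I hI = insert e I := if_neg heI
        rw [this, Finset.card_insert_of_notMem heI, pow_succ]
        ring
    have hne' : ∀ (I : Finset α) (hI : I ∈ s), (-1 : ℤ) ^ I.card ≠ 0 → g I hI ≠ I := by
      intro I hI _
      by_cases heI : e ∈ I
      · have hgi : g I hI = I.erase e := if_pos heI
        rw [hgi]
        intro h
        have hc := Finset.card_erase_of_mem heI
        rw [h] at hc
        have hpos := Finset.card_pos.mpr ⟨e, heI⟩
        omega
      · have hgi : g I hI = insert e I := if_neg heI
        rw [hgi]
        intro h
        have hc := Finset.card_insert_of_notMem heI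
        rw [h] at hc
        omega
    have hgmem : ∀ (I : Finset α) (hI : I ∈ s), g I hI ∈ s := by
      intro I hI
      obtain ⟨hnbc, hsub⟩ := hmem I hI
      by_cases heI : e ∈ I
      · have hgi : g I hI = I.erase e := if_pos heI
        rw [hgi]
        exact hmem' _ (nbc_mono M hnbc (Finset.erase_subset _ _))
          ((Finset.erase_subset _ _).trans hsub)
      · have hgi : g I hI = insert e I := if_neg heI
        rw [hgi]
        exact hmem' _ (nbc_insert_min M hX hne hsub hnbc)
          (Finset.insert_subset (X.min'_mem hne) hsub)
    have hinv : ∀ (I : Finset α) (hI : I ∈ s), g (g I hI) (hgmem I hI) = I := by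
      intro I hI
      by_cases heI : e ∈ I
      · have hgi : g I hI = I.erase e := if_pos heI
        have h2 : g (g I hI) (hgmem I hI) = insert e (g I hI) := by
          apply if_neg; rw [hgi]; exact Finset.notMem_erase e I
        rw [h2, hgi, Finset.insert_erase heI]
      · have hgi : g I hI = insert e I := if_neg heI
        have h2 : g (g I hI) (hgmem I hI) = (g I hI).erase e := by
          apply if_pos; rw [hgi]; exact Finset.mem_insert_self e I
        rw [h2, hgi, Finset.erase_insert heI]
    exact Finset.sum_involution g hcancel hne' hgmem hinv

lemma flat_closure {α : Type*} (M : Matroid α) (X : Set α) : M.IsFlat (M.closure X) := by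
  constructor
  · intro I Y hI hIY
    have h1 : M.closure ↑I = M.closure (M.closure X) := hI.closure_eq_closure
    have h2 := hIY.subset_closure
    rw [h1, M.closure_closure] at h2
    exact h2
  · exact M.closure_subset_ground X

lemma closure_empty_eq {α : Type*} (M : Matroid α) (hLoopless : ∀ e : α, M.Indep {e}) :
    M.closure ∅ = ∅ := by
  ext e
  simp only [Set.mem_empty_iff_false, iff_false]
  intro he
  have := M.empty_indep.mem_closure_iff.mp he
  rcases this with h | h
  · exact h.not_indep (by simpa using hLoopless e)
  · exact h

lemma grouped {α : Type*} [Fintype α] [LinearOrder α] (M : Matroid α)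
    (hE : M.E = Set.univ) (hLoopless : ∀ e : α, M.Indep {e}) {X : Finset α}
    (hX : M.IsFlat ↑X) :
    (∑ Y ∈ Finset.univ.filter (fun Y : Finset α => M.IsFlat ↑Y ∧ Y ⊆ X),
        (-1 : ℤ) ^ (M.mrk ↑Y) *
          ((Finset.univ.filter fun I : Finset α => M.NbcSet I ∧ M.closure ↑I = ↑Y).card : ℤ))
      = if X = ∅ then 1 else 0 := by
  rw [← sum_identity M hLoopless hX]
  rw [← Finset.sum_fiberwise_of_maps_to
    (g := fun I : Finset α => (M.closure ↑I).toFinset)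
    (t := Finset.univ.filter (fun Y : Finset α => M.IsFlat ↑Y ∧ Y ⊆ X))
    (f := fun I : Finset α => (-1 : ℤ) ^ I.card) ?_]
  · apply Finset.sum_congr rfl
    intro Y hY
    simp only [Finset.mem_filter, Finset.mem_univ, true_and] at hY
    obtain ⟨hYflat, hYX⟩ := hY
    have hfib : (Finset.univ.filter (fun I : Finset α => M.NbcSet I ∧ I ⊆ X)).filter
        (fun I : Finset α => (M.closure ↑I).toFinset = Y)
        = Finset.univ.filter (fun I : Finset α => M.NbcSet I ∧ M.closure ↑I = ↑Y) := by
      ext I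
      simp only [Finset.mem_filter, Finset.mem_univ, true_and]
      constructor
      · rintro ⟨⟨hnbc, _⟩, hcl⟩
        refine ⟨hnbc, ?_⟩
        rw [← hcl, Set.coe_toFinset]
      · rintro ⟨hnbc, hcl⟩
        have hIY : I ⊆ Y := by
          intro x hx
          have : x ∈ M.closure ↑I := M.subset_closure ↑I
            (by rw [hE]; exact Set.subset_univ _) (by exact_mod_cast hx)
          rw [hcl] at this
          exact_mod_cast this
        refine ⟨⟨hnbc, hIY.trans hYX⟩, ?_⟩
        rw [hcl, Finset.toFinset_coe]
      
    rw [hfib]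
    have hcard : ∀ I ∈ Finset.univ.filter
        (fun I : Finset α => M.NbcSet I ∧ M.closure ↑I = ↑Y),
        (-1 : ℤ) ^ I.card = (-1 : ℤ) ^ (M.mrk ↑Y) := by
      intro I hI
      simp only [Finset.mem_filter, Finset.mem_univ, true_and] at hI
      rw [mrkB M hE (nbc_indep M hE hI.1) hI.2]
    rw [Finset.sum_congr rfl hcard, Finset.sum_const, nsmul_eq_mul, mul_comm]
  · intro I hI
    simp only [Finset.mem_filter, Finset.mem_univ, true_and] at hI ⊢
    obtain ⟨hnbc, hsub⟩ := hI
    constructor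
    · rw [Set.coe_toFinset]; exact flat_closure M _
    · intro x hx
      rw [Set.mem_toFinset] at hx
      have : M.closure ↑I ⊆ M.closure ↑X := M.closure_subset_closure (by exact_mod_cast hsub)
      rw [hX.closure] at this
      exact_mod_cast this hx

/-- Whitney's theorem: `(-1)^{rk X} μ(∅̂,X)` counts nbc-sets with closure `X`, and the
unsigned Whitney number `w_k` counts nbc-sets of size `k`. -/
theorem stmt_4 {α : Type*} [Fintype α] [LinearOrder α] (M : Matroid α)
    (hE : M.E = Set.univ) (hLoopless : ∀ e : α, M.Indep {e}) (r : ℕ)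
    (hr : M.mrk Set.univ = r) (μ : Finset α → ℤ)
    (hμ : ∀ X : Finset α, M.IsFlat ↑X →
      (∑ Y ∈ Finset.univ.filter fun Y : Finset α => M.IsFlat ↑Y ∧ Y ⊆ X, μ Y) =
        if (↑X : Set α) = M.closure ∅ then 1 else 0) :
    (∀ X : Finset α, M.IsFlat ↑X →
      (-1 : ℤ) ^ (M.mrk ↑X) * μ X =
        ((Finset.univ.filter fun I : Finset α => M.NbcSet I ∧ M.closure ↑I = ↑X).card : ℤ)) ∧
    (∀ k : ℕ,
      (-1 : ℤ) ^ k *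
          (∑ X ∈ Finset.univ.filter fun X : Finset α => M.IsFlat ↑X ∧ M.mrk ↑X = k, μ X) =
        ((Finset.univ.filter fun I : Finset α => M.NbcSet I ∧ I.card = k).card : ℤ)) := by
  have hcl0 : M.closure ∅ = ∅ := closure_empty_eq M hLoopless
  -- the main inductive claim
  have key : ∀ X : Finset α, M.IsFlat ↑X → μ X = (-1 : ℤ) ^ (M.mrk ↑X) *
      ((Finset.univ.filter fun I : Finset α => M.NbcSet I ∧ M.closure ↑I = ↑X).card : ℤ) := by
    intro X
    induction X using Finset.strongInductionOn with
    | _ X ih =>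
      intro hX
      have h1 := hμ X hX
      have h2 := grouped M hE hLoopless hX
      have hiff : ((↑X : Set α) = M.closure ∅) ↔ X = ∅ := by
        rw [hcl0]
        constructor
        · intro h; exact_mod_cast h
        · rintro rfl; simp
      have h1' : (∑ Y ∈ Finset.univ.filter fun Y : Finset α => M.IsFlat ↑Y ∧ Y ⊆ X, μ Y) =
          if X = ∅ then 1 else 0 := by
        rw [h1]
        by_cases h : X = ∅
        · rw [if_pos (hiff.mpr h), if_pos h]
        · rw [if_neg (fun hc => h (hiff.mp hc)), if_neg h]
      have hzero : (∑ Y ∈ Finset.univ.filter fun Y : Finset α => M.IsFlat ↑Y ∧ Y ⊆ X,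
          (μ Y - (-1 : ℤ) ^ (M.mrk ↑Y) *
            ((Finset.univ.filter fun I : Finset α =>
              M.NbcSet I ∧ M.closure ↑I = ↑Y).card : ℤ))) = 0 := by
        rw [Finset.sum_sub_distrib, h1', h2, sub_self]
      have hXmem : X ∈ Finset.univ.filter (fun Y : Finset α => M.IsFlat ↑Y ∧ Y ⊆ X) := by
        simp [hX]
      rw [← Finset.add_sum_erase _ _ hXmem] at hzero
      have herase : (∑ Y ∈ (Finset.univ.filter
          (fun Y : Finset α => M.IsFlat ↑Y ∧ Y ⊆ X)).erase X,
          (μ Y - (-1 : ℤ) ^ (M.mrk ↑Y) *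
            ((Finset.univ.filter fun I : Finset α =>
              M.NbcSet I ∧ M.closure ↑I = ↑Y).card : ℤ))) = 0 := by
        apply Finset.sum_eq_zero
        intro Y hY
        simp only [Finset.mem_erase, Finset.mem_filter, Finset.mem_univ, true_and] at hY
        obtain ⟨hne, hYflat, hYX⟩ := hY
        rw [ih Y (lt_of_le_of_ne hYX hne) hYflat, sub_self]
      rw [herase, add_zero, sub_eq_zero] at hzero
      exact hzero
  constructor
  · intro X hX
    rw [key X hX, ← mul_assoc, ← pow_add, ← two_mul, pow_mul]
    norm_num
  · intro k
    rw [Finset.mul_sum]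
    have hterm : ∀ X ∈ Finset.univ.filter
        (fun X : Finset α => M.IsFlat ↑X ∧ M.mrk ↑X = k),
        (-1 : ℤ) ^ k * μ X =
          ((Finset.univ.filter fun I : Finset α =>
            M.NbcSet I ∧ M.closure ↑I = ↑X).card : ℤ) := by
      intro X hX
      simp only [Finset.mem_filter, Finset.mem_univ, true_and] at hX
      obtain ⟨hXflat, hXr⟩ := hX
      rw [← hXr, key X hXflat, ← mul_assoc, ← pow_add, ← two_mul, pow_mul]
      norm_num
    rw [Finset.sum_congr rfl hterm]
    have hmaps : ∀ I ∈ Finset.univ.filter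
        (fun I : Finset α => M.NbcSet I ∧ I.card = k),
        (M.closure ↑I).toFinset ∈ Finset.univ.filter
          (fun X : Finset α => M.IsFlat ↑X ∧ M.mrk ↑X = k) := by
      intro I hI
      simp only [Finset.mem_filter, Finset.mem_univ, true_and] at hI ⊢
      obtain ⟨hnbc, hcard⟩ := hI
      have hind := nbc_indep M hE hnbc
      constructor
      · rw [Set.coe_toFinset]; exact flat_closure M _
      · rw [← hcard]
        exact mrkB M hE hind (Set.coe_toFinset _).symm
    have hnat : (Finset.univ.filter
        (fun I : Finset α => M.NbcSet I ∧ I.card = k)).card =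
        ∑ X ∈ Finset.univ.filter (fun X : Finset α => M.IsFlat ↑X ∧ M.mrk ↑X = k),
          (Finset.univ.filter (fun I : Finset α =>
            M.NbcSet I ∧ M.closure ↑I = ↑X)).card := by
      rw [Finset.card_eq_sum_card_fiberwise hmaps]
      apply Finset.sum_congr rfl
      intro X hX
      simp only [Finset.mem_filter, Finset.mem_univ, true_and] at hX
      obtain ⟨hXflat, hXr⟩ := hX
      congr 1
      ext I
      simp only [Finset.mem_filter, Finset.mem_univ, true_and]
      constructor
      · rintro ⟨⟨hnbc, hcard⟩, hcl⟩
        refine ⟨hnbc, ?_⟩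
        rw [← hcl, Set.coe_toFinset]
      · rintro ⟨hnbc, hcl⟩
        have hind := nbc_indep M hE hnbc
        have : M.mrk ↑X = I.card := mrkB M hE hind hcl
        refine ⟨⟨hnbc, by rw [← this, hXr]⟩, ?_⟩
        rw [hcl, Finset.toFinset_coe]
    rw [hnat, Nat.cast_sum]
end

section
/- A subset T of the ground set of a simple matroid M is independent if and only if the image ω_T of the exterior monomial e_T in the Orlik–Solomon algebra A(M) is nonzero. -/
open scoped Classical

/-- The exterior monomial indexed by a list of ground-set elements. -/
noncomputable def eMon {α : Type*} [DecidableEq α] (K : Type*) [Field K] (l : List α) :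
    ExteriorAlgebra K (α → K) :=
  (l.map fun i => ExteriorAlgebra.ι K (Pi.single i (1 : K))).prod

/-- The exterior monomial of a finite set, taken in increasing order. -/
noncomputable def eFin {α : Type*} [LinearOrder α] (K : Type*) [Field K] (S : Finset α) :
    ExteriorAlgebra K (α → K) :=
  eMon K (S.sort (· ≤ ·))

/-- The boundary `∂ e_S` of the exterior monomial of a finite set. -/
noncomputable def bdMon {α : Type*} [LinearOrder α] (K : Type*) [Field K] (S : Finset α) :
    ExteriorAlgebra K (α → K) :=
  ∑ j ∈ Finset.range S.card, (-1 : K) ^ j • eMon K ((S.sort (· ≤ ·)).eraseIdx j)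

/-- The Orlik–Solomon relations: each `∂ e_C`, for a circuit `C`, is set to zero. -/
def OSRel {α : Type*} [LinearOrder α] (K : Type*) [Field K] (M : Matroid α)
    (x y : ExteriorAlgebra K (α → K)) : Prop :=
  (∃ C : Finset α, M.IsCircuitF C ∧ x = bdMon K C) ∧ y = 0

/-- The Orlik–Solomon algebra `A(M) = Λ(k^E)/I(M)`. -/
abbrev OSAlg {α : Type*} [LinearOrder α] (K : Type*) [Field K] (M : Matroid α) :=
  RingQuot (OSRel K M)

/-- `ω_T`, the image of `e_T` in the Orlik–Solomon algebra. -/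
noncomputable def omegaT {α : Type*} [LinearOrder α] (K : Type*) [Field K] (M : Matroid α)
    (T : Finset α) : OSAlg K M :=
  RingQuot.mkAlgHom K (OSRel K M) (eFin K T)

/-! ### Auxiliary lemmas on wedges of lists of vectors -/

section Wedge

variable (K : Type*) [Field K] {W : Type*} [AddCommGroup W] [Module K W]

/-- The wedge product of a list of vectors. -/
noncomputable def wMon (l : List W) : ExteriorAlgebra K W :=
  (l.map fun w => ExteriorAlgebra.ι K w).prod

@[simp] lemma wMon_nil : wMon K ([] : List W) = 1 := rfl

@[simp] lemma wMon_cons (w : W) (l : List W) :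
    wMon K (w :: l) = ExteriorAlgebra.ι K w * wMon K l := by
  simp [wMon]

lemma wMon_append (l₁ l₂ : List W) : wMon K (l₁ ++ l₂) = wMon K l₁ * wMon K l₂ := by
  simp [wMon]

lemma wMon_perm {l₁ l₂ : List W} (h : l₁.Perm l₂) :
    wMon K l₁ = wMon K l₂ ∨ wMon K l₁ = - wMon K l₂ := by
  induction h with
  | nil => exact Or.inl rfl
  | cons a _ ih =>
    rcases ih with h' | h'
    · exact Or.inl (by rw [wMon_cons, wMon_cons, h'])
    · exact Or.inr (by rw [wMon_cons, wMon_cons, h', mul_neg])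
  | swap a b l =>
    refine Or.inr ?_
    have hswap : ExteriorAlgebra.ι K b * ExteriorAlgebra.ι K a
        = - (ExteriorAlgebra.ι K a * ExteriorAlgebra.ι K b) := by
      have := ExteriorAlgebra.ι_add_mul_swap (R := K) a b
      linear_combination (norm := noncomm_ring) this
    rw [wMon_cons, wMon_cons, wMon_cons, wMon_cons, ← mul_assoc, ← mul_assoc, hswap,
      neg_mul]
  | trans h1 h2 ih1 ih2 =>
    rcases ih1 with h' | h' <;> rcases ih2 with h'' | h''
    · exact Or.inl (h'.trans h'')
    · exact Or.inr (h'.trans h'')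
    · exact Or.inr (by rw [h', h''])
    · exact Or.inl (by rw [h', h'', neg_neg])

lemma wMon_eq_zero_of_not_nodup {l : List W} (h : ¬ l.Nodup) : wMon K l = 0 := by
  induction l with
  | nil => exact absurd List.nodup_nil h
  | cons a t ih =>
    rw [List.nodup_cons] at h
    push_neg at h
    by_cases ht : t.Nodup
    · have ha : a ∈ t := by
        by_contra hma
        exact h hma ht
      have hperm : t.Perm (a :: t.erase a) := List.perm_cons_erase ha
      rcases wMon_perm K hperm with h' | h'
      · rw [wMon_cons, h', wMon_cons, ← mul_assoc, ExteriorAlgebra.ι_sq_zero, zero_mul]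
      · rw [wMon_cons, h', mul_neg, wMon_cons, ← mul_assoc, ExteriorAlgebra.ι_sq_zero,
          zero_mul, neg_zero]
    · rw [wMon_cons, ih ht, mul_zero]

lemma contract_wMon (d : Module.Dual K W) {l : List W} (hd : ∀ w ∈ l, d w = 1) :
    CliffordAlgebra.contractLeft d (wMon K l) =
      ∑ j ∈ Finset.range l.length, (-1 : K) ^ j • wMon K (l.eraseIdx j) := by
  induction l with
  | nil => simp [CliffordAlgebra.contractLeft_one]
  | cons a t ih =>
    rw [wMon_cons, CliffordAlgebra.contractLeft_ι_mul, hd a List.mem_cons_self,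
      ih (fun w hw => hd w (List.mem_cons_of_mem _ hw)), one_smul]
    rw [List.length_cons, Finset.sum_range_succ']
    simp only [List.eraseIdx_cons_succ, List.eraseIdx_cons_zero, pow_succ, pow_zero, one_smul,
      wMon_cons, Finset.mul_sum, mul_smul_comm, mul_neg_one, neg_smul, Finset.sum_neg_distrib]
    abel

lemma contract_wMon_zero (d : Module.Dual K W) {l : List W} (hd : ∀ w ∈ l, d w = 0) :
    CliffordAlgebra.contractLeft d (wMon K l) = 0 := by
  induction l with
  | nil => simp [CliffordAlgebra.contractLeft_one]
  | cons a t ih =>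
    rw [wMon_cons, CliffordAlgebra.contractLeft_ι_mul, hd a List.mem_cons_self,
      ih (fun w hw => hd w (List.mem_cons_of_mem _ hw)), zero_smul, mul_zero, sub_zero]

lemma wMon_single_ne_zero (ns : List ℕ) (h : ns.Nodup) :
    wMon K (ns.map fun n => (Pi.single n 1 : ℕ → K)) ≠ 0 := by
  induction ns with
  | nil => simpa using one_ne_zero
  | cons n t ih =>
    rw [List.nodup_cons] at h
    intro h0
    have hproj : CliffordAlgebra.contractLeft (LinearMap.proj (R := K) (φ := fun _ : ℕ => K) n)
        (wMon K ((n :: t).map fun m => (Pi.single m 1 : ℕ → K))) = 0 := by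
      rw [h0, map_zero]
    rw [List.map_cons, wMon_cons, CliffordAlgebra.contractLeft_ι_mul,
      contract_wMon_zero (K := K) _ (fun w hw => ?_), mul_zero, sub_zero] at hproj
    · simp only [LinearMap.proj_apply, Pi.single_eq_same, one_smul] at hproj
      exact ih h.2 hproj
    · obtain ⟨m, hm, rfl⟩ := List.mem_map.mp hw
      have : m ≠ n := fun hmn => h.1 (hmn ▸ hm)
      simp [LinearMap.proj_apply, Pi.single_eq_of_ne (Ne.symm this)]

end Wedge

lemma List.map_eraseIdx' {α β : Type*} (f : α → β) (l : List α) (j : ℕ) :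
    (l.eraseIdx j).map f = (l.map f).eraseIdx j := by
  induction l generalizing j with
  | nil => simp
  | cons a t ih =>
    cases j with
    | zero => simp
    | succ j => simp [ih]

section Main

variable {α : Type*} [LinearOrder α] (K : Type*) [Field K]

lemma eMon_eq_wMon (l : List α) :
    eMon K l = wMon K (l.map fun i => (Pi.single i (1 : K) : α → K)) := by
  simp only [wMon, List.map_map]
  rfl

lemma eMon_append (l₁ l₂ : List α) : eMon K (l₁ ++ l₂) = eMon K l₁ * eMon K l₂ := by
  simp [eMon]

/-- Every dependent finset contains a circuit. -/
lemma exists_circuit_subset {M : Matroid α} {T : Finset α} (hE : M.E = Set.univ)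
    (hT : M.Dep ↑T) : ∃ C : Finset α, C ⊆ T ∧ M.IsCircuitF C := by
  classical
  set s : Finset (Finset α) := T.powerset.filter (fun S => M.Dep ↑S) with hs
  have hTs : T ∈ s := by simp [hs, Finset.mem_filter, hT]
  obtain ⟨C, hCs, hmin⟩ := s.exists_min_image Finset.card ⟨T, hTs⟩
  rw [hs, Finset.mem_filter, Finset.mem_powerset] at hCs
  refine ⟨C, hCs.1, hCs.2, fun D hD => ?_⟩
  by_contra hni
  have hDdep : M.Dep ↑D := Matroid.dep_iff.mpr ⟨hni, by rw [hE]; exact Set.subset_univ _⟩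
  have hDs : D ∈ s := by
    rw [hs, Finset.mem_filter, Finset.mem_powerset]
    exact ⟨hD.subset.trans hCs.1, hDdep⟩
  exact absurd (hmin D hDs) (not_le.mpr (Finset.card_lt_card hD))

lemma ι_mul_bdMon (S : Finset α) (hS : S.Nonempty) :
    ∃ a : α, ExteriorAlgebra.ι K (Pi.single a (1 : K)) * bdMon K S = eFin K S := by
  have hne : S.sort (· ≤ ·) ≠ [] := by
    intro h
    have h1 := Finset.length_sort (α := α) (· ≤ ·) (s := S)
    rw [h] at h1
    simp only [List.length_nil] at h1
    have h2 := hS.card_pos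
    omega
  obtain ⟨a, rest, hl⟩ := List.exists_cons_of_ne_nil hne
  have hcard : S.card = rest.length + 1 := by
    rw [← Finset.length_sort (· ≤ ·), hl, List.length_cons]
  refine ⟨a, ?_⟩
  rw [bdMon, eFin, hl, hcard, Finset.mul_sum, Finset.sum_range_succ']
  have h0 : ExteriorAlgebra.ι K (Pi.single a (1 : K)) *
      ((-1 : K) ^ 0 • eMon K ((a :: rest).eraseIdx 0)) = eMon K (a :: rest) := by
    simp [eMon, mul_smul_comm]
  have hsucc : ∀ j, ExteriorAlgebra.ι K (Pi.single a (1 : K)) *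
      ((-1 : K) ^ (j + 1) • eMon K ((a :: rest).eraseIdx (j + 1))) = 0 := by
    intro j
    rw [List.eraseIdx_cons_succ, mul_smul_comm]
    have : eMon K (a :: rest.eraseIdx j) =
        ExteriorAlgebra.ι K (Pi.single a (1 : K)) * eMon K (rest.eraseIdx j) := by
      simp [eMon]
    rw [this, ← mul_assoc, ExteriorAlgebra.ι_sq_zero, zero_mul, smul_zero]
  rw [Finset.sum_congr rfl (fun j _ => hsucc j), Finset.sum_const_zero, zero_add, h0]

lemma omegaT_eq_zero_of_dep {M : Matroid α} {T : Finset α} (hE : M.E = Set.univ)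
    (hT : M.Dep ↑T) : omegaT K M T = 0 := by
  classical
  obtain ⟨C, hCT, hC⟩ := exists_circuit_subset hE hT
  have hCne : C.Nonempty := by
    rw [← Finset.coe_nonempty]
    exact hC.1.nonempty
  obtain ⟨a, ha⟩ := ι_mul_bdMon K C hCne
  have hbd0 : RingQuot.mkAlgHom K (OSRel K M) (bdMon K C) = 0 := by
    have := RingQuot.mkAlgHom_rel K (s := OSRel K M) ⟨⟨C, hC, rfl⟩, rfl⟩
    rwa [map_zero] at this
  have hC0 : RingQuot.mkAlgHom K (OSRel K M) (eFin K C) = 0 := by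
    rw [← ha, map_mul, hbd0, mul_zero]
  have hperm : (T.sort (· ≤ ·)).Perm ((C.sort (· ≤ ·)) ++ ((T \ C).sort (· ≤ ·))) := by
    refine (List.perm_ext_iff_of_nodup (Finset.sort_nodup _ _) ?_).mpr ?_
    · rw [List.nodup_append]
      refine ⟨Finset.sort_nodup _ _, Finset.sort_nodup _ _, fun x hx y hx' hxy => ?_⟩
      subst hxy
      rw [Finset.mem_sort] at hx hx'
      exact (Finset.mem_sdiff.mp hx').2 hx
    · intro x
      simp only [List.mem_append, Finset.mem_sort, Finset.mem_sdiff]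
      constructor
      · intro hx
        by_cases hxC : x ∈ C
        · exact Or.inl hxC
        · exact Or.inr ⟨hx, hxC⟩
      · rintro (hx | hx)
        · exact hCT hx
        · exact hx.1
  have hmulz : RingQuot.mkAlgHom K (OSRel K M)
      (eMon K ((C.sort (· ≤ ·)) ++ ((T \ C).sort (· ≤ ·)))) = 0 := by
    rw [eMon_append, map_mul]
    rw [show eMon K (C.sort (· ≤ ·)) = eFin K C from rfl, hC0, zero_mul]
  have := wMon_perm K (hperm.map (fun i => (Pi.single i (1 : K) : α → K)))
  rw [← eMon_eq_wMon, ← eMon_eq_wMon] at this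
  rcases this with h' | h'
  · rw [omegaT, eFin, h', hmulz]
  · rw [omegaT, eFin, h', map_neg, hmulz, neg_zero]

end Main

section Hard

variable {α : Type*} [Fintype α] [LinearOrder α] (K : Type*) [Field K]

lemma omegaT_ne_zero_of_indep (M : Matroid α) (hE : M.E = Set.univ)
    (hSimple : ∀ i j : α, M.Indep {i, j}) {T : Finset α} (hT : M.Indep ↑T) :
    omegaT K M T ≠ 0 := by
  classical
  obtain ⟨B, hB, hTB⟩ := hT.exists_isBase_superset
  have hBfin : B.Finite := Set.toFinite B
  set lB : List α := T.sort (· ≤ ·) ++ (hBfin.toFinset \ T).sort (· ≤ ·) with hlB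
  have hnodup : lB.Nodup := by
    rw [hlB, List.nodup_append]
    refine ⟨Finset.sort_nodup _ _, Finset.sort_nodup _ _, fun x hx y hx' hxy => ?_⟩
    subst hxy
    rw [Finset.mem_sort] at hx hx'
    exact (Finset.mem_sdiff.mp hx').2 hx
  have hlBmem : ∀ a, a ∈ lB ↔ a ∈ B := by
    intro a
    rw [hlB]
    simp only [List.mem_append, Finset.mem_sort, Finset.mem_sdiff, Set.Finite.mem_toFinset]
    constructor
    · rintro (h | h)
      · exact hTB h
      · exact h.1
    · intro h
      by_cases haT : a ∈ T
      · exact Or.inl haT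
      · exact Or.inr ⟨h, haT⟩
  set r : ℕ := lB.length with hr
  set F : ℕ → Set α := fun i => M.closure ↑((lB.take i).toFinset) with hF
  have hFr : ∀ a, a ∈ F r := by
    intro a
    have h1 : (lB.take r).toFinset = lB.toFinset := by rw [hr, List.take_length]
    have h2 : (↑lB.toFinset : Set α) = B := by
      ext x
      simp only [List.coe_toFinset, Set.mem_setOf_eq]
      exact hlBmem x
    rw [hF]
    simp only [h1, h2]
    rw [hB.closure_eq, hE]
    exact Set.mem_univ a
  set ℓ : α → ℕ := fun a => Nat.find (⟨r, hFr a⟩ : ∃ i, a ∈ F i) with hℓ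
  have hℓ_mem : ∀ a, a ∈ F (ℓ a) := fun a => Nat.find_spec (⟨r, hFr a⟩ : ∃ i, a ∈ F i)
  have hℓ_not : ∀ a i, i < ℓ a → a ∉ F i := fun a i hi => Nat.find_min (⟨r, hFr a⟩ : ∃ i, a ∈ F i) hi
  have hℓ_le : ∀ a, ℓ a ≤ r := fun a => Nat.find_le (hFr a)
  have hF_mono : ∀ i j, i ≤ j → F i ⊆ F j := by
    intro i j hij
    rw [hF]
    apply Matroid.closure_subset_closure
    intro x hx
    simp only [List.coe_toFinset, Set.mem_setOf_eq, List.mem_take_iff_getElem] at hx ⊢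
    obtain ⟨k, hk, hkx⟩ := hx
    exact ⟨k, by omega, hkx⟩
  have hℓ_pos : ∀ a, 1 ≤ ℓ a := by
    intro a
    rcases Nat.eq_zero_or_pos (ℓ a) with h0 | h1
    · exfalso
      have ha : a ∈ F 0 := h0 ▸ hℓ_mem a
      rw [hF] at ha
      simp only [List.take_zero, List.toFinset_nil, Finset.coe_empty] at ha
      have hsing : M.Indep {a} := by
        have := hSimple a a
        rwa [Set.pair_eq_singleton] at this
      have := hsing.notMem_closure_sdiff_of_mem (Set.mem_singleton a)
      rw [Set.diff_self] at this
      exact this ha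
    · exact h1
  have hget : ∀ (i : ℕ) (h : i < r), ℓ (lB.get ⟨i, h⟩) = i + 1 := by
    intro i h
    set a := lB.get ⟨i, h⟩ with ha
    have hmem_lB : a ∈ lB := by
      rw [ha, List.get_eq_getElem]
      exact List.getElem_mem _
    have hub : ℓ a ≤ i + 1 := by
      apply Nat.find_le
      rw [hF]
      apply Matroid.subset_closure _ _ (by rw [hE]; exact Set.subset_univ _)
      simp only [List.coe_toFinset, Set.mem_setOf_eq, List.mem_take_iff_getElem]
      exact ⟨i, by omega, by rw [ha, List.get_eq_getElem]⟩
    have hlb : i + 1 ≤ ℓ a := by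
      by_contra hcon
      push_neg at hcon
      have hile : ℓ a ≤ i := by omega
      have haFi : a ∈ F i := hF_mono _ _ hile (hℓ_mem a)
      have hsub : (↑(lB.take i).toFinset : Set α) ⊆ B \ {a} := by
        intro x hx
        simp only [List.coe_toFinset, Set.mem_setOf_eq, List.mem_take_iff_getElem] at hx
        obtain ⟨k, hk, hkx⟩ := hx
        have hkr : k < r := by omega
        refine ⟨(hlBmem x).mp (hkx ▸ List.getElem_mem _), ?_⟩
        intro hxa
        rw [Set.mem_singleton_iff] at hxa
        have hki : lB[k]'hkr = lB[i]'h := by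
          rw [hkx, hxa, ha, List.get_eq_getElem]
        have : k = i := (hnodup.getElem_inj_iff).mp hki
        omega
      have hnotin : a ∉ M.closure (B \ {a}) :=
        hB.indep.notMem_closure_sdiff_of_mem ((hlBmem a).mp hmem_lB)
      exact hnotin ((Matroid.closure_subset_closure M hsub) haFi)
    omega
  have hℓinj : ∀ a ∈ lB, ∀ b ∈ lB, ℓ a = ℓ b → a = b := by
    intro a ha b hb hab
    obtain ⟨⟨i, hi⟩, rfl⟩ := List.mem_iff_get.mp ha
    obtain ⟨⟨j, hj⟩, rfl⟩ := List.mem_iff_get.mp hb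
    rw [hget i hi, hget j hj] at hab
    have : i = j := by omega
    subst this
    rfl
  -- every circuit has two distinct elements with equal color
  have hcol : ∀ C : Finset α, M.IsCircuitF C →
      ∃ c ∈ C, ∃ c' ∈ C, c ≠ c' ∧ ℓ c = ℓ c' := by
    intro C hC
    by_contra hcon
    push_neg at hcon
    have hCne : C.Nonempty := by
      rw [← Finset.coe_nonempty]
      exact hC.1.nonempty
    obtain ⟨c, hcC, hmax⟩ := C.exists_max_image ℓ hCne
    set m := ℓ c with hm
    have hm1 : 1 ≤ m := hℓ_pos c
    have hsub : (↑C : Set α) \ {c} ⊆ F (m - 1) := by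
      intro x hx
      obtain ⟨hxC, hxc⟩ := hx
      rw [Set.mem_singleton_iff] at hxc
      have hne : ℓ x ≠ m := hcon x hxC c hcC hxc
      have hle : ℓ x ≤ m - 1 := by
        have := hmax x hxC
        omega
      exact hF_mono _ _ hle (hℓ_mem x)
    have hcerase : M.Indep (↑(C.erase c) : Set α) := hC.2 _ (Finset.erase_ssubset hcC)
    rw [Finset.coe_erase] at hcerase
    have hc_cl : c ∈ M.closure ((↑C : Set α) \ {c}) := by
      by_contra hnc
      have hcE : c ∈ M.E := by rw [hE]; exact Set.mem_univ c
      have hnotmem : c ∉ (↑C : Set α) \ {c} := fun h => h.2 rfl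
      have hins := (hcerase.insert_indep_iff_of_notMem hnotmem).mpr ⟨hcE, hnc⟩
      have hCeq : insert c ((↑C : Set α) \ {c}) = (↑C : Set α) := by
        rw [Set.insert_diff_singleton]
        exact Set.insert_eq_of_mem (Finset.mem_coe.mpr hcC)
      rw [hCeq] at hins
      exact hC.1.not_indep hins
    have hcF : c ∈ F (m - 1) := by
      have h1 : M.closure ((↑C : Set α) \ {c}) ⊆ M.closure (F (m - 1)) :=
        Matroid.closure_subset_closure M hsub
      have h2 : M.closure (F (m - 1)) = F (m - 1) := by
        rw [hF]
        exact Matroid.closure_closure M _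
      exact h2 ▸ h1 hc_cl
    exact hℓ_not c (m - 1) (by omega) hcF
  -- the linear map and the algebra morphism
  set g : α → (ℕ → K) := fun a => Pi.single (ℓ a) 1 with hg
  set f : (α → K) →ₗ[K] (ℕ → K) :=
    { toFun := fun v => ∑ a : α, v a • g a
      map_add' := by
        intro v w
        simp [add_smul, Finset.sum_add_distrib]
      map_smul' := by
        intro c v
        simp [smul_smul, Finset.smul_sum] } with hf
  have hfs : ∀ a : α, f (Pi.single a 1) = g a := by
    intro a
    rw [hf]
    simp only [LinearMap.coe_mk, AddHom.coe_mk]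
    rw [Fintype.sum_eq_single a]
    · rw [Pi.single_eq_same, one_smul]
    · intro b hb
      rw [Pi.single_eq_of_ne hb, zero_smul]
  set Fm : ExteriorAlgebra K (α → K) →ₐ[K] ExteriorAlgebra K (ℕ → K) :=
    ExteriorAlgebra.lift K ⟨(ExteriorAlgebra.ι K).comp f,
      fun m => ExteriorAlgebra.ι_sq_zero _⟩ with hFm
  have hFm_ι : ∀ a : α, Fm (ExteriorAlgebra.ι K (Pi.single a 1)) =
      ExteriorAlgebra.ι K (g a) := by
    intro a
    rw [hFm, ExteriorAlgebra.lift_ι_apply, LinearMap.comp_apply, hfs]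
  have hFm_eMon : ∀ l : List α, Fm (eMon K l) = wMon K (l.map g) := by
    intro l
    rw [eMon, map_list_prod, wMon, List.map_map, List.map_map]
    congr 1
    apply List.map_congr_left
    intro a _
    exact hFm_ι a
  -- the dual functional
  set d : Module.Dual K (ℕ → K) :=
    { toFun := fun v => ∑ n ∈ Finset.range (r + 1), v n
      map_add' := by intro v w; simp [Finset.sum_add_distrib]
      map_smul' := by intro c v; simp [Finset.mul_sum] } with hd
  have hd1 : ∀ a : α, d (g a) = 1 := by
    intro a
    rw [hd, hg]
    simp only [LinearMap.coe_mk, AddHom.coe_mk]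
    rw [Finset.sum_eq_single_of_mem (ℓ a) (Finset.mem_range.mpr (by have := hℓ_le a; omega))]
    · exact Pi.single_eq_same _ _
    · intro b _ hb
      exact Pi.single_eq_of_ne hb _
  -- Fm kills the relations
  have hFbd : ∀ C : Finset α, M.IsCircuitF C → Fm (bdMon K C) = 0 := by
    intro C hC
    obtain ⟨c, hc, c', hc', hne, hleq⟩ := hcol C hC
    set mlist : List (ℕ → K) := (C.sort (· ≤ ·)).map g with hmlist
    have hm0 : wMon K mlist = 0 := by
      apply wMon_eq_zero_of_not_nodup
      intro hnd
      have hcs : c ∈ C.sort (· ≤ ·) := (Finset.mem_sort _).mpr hc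
      have hperm : (C.sort (· ≤ ·)).Perm (c :: (C.sort (· ≤ ·)).erase c) :=
        List.perm_cons_erase hcs
      have hnd2 : (g c :: ((C.sort (· ≤ ·)).erase c).map g).Nodup := by
        rw [← List.map_cons]
        exact ((hperm.map g).nodup_iff).mp hnd
      have hgc : g c' = g c := by rw [hg]; simp only [hleq]
      have hc's : c' ∈ (C.sort (· ≤ ·)).erase c :=
        (List.mem_erase_of_ne (Ne.symm hne)).mpr ((Finset.mem_sort _).mpr hc')
      have : g c ∈ ((C.sort (· ≤ ·)).erase c).map g :=
        hgc ▸ List.mem_map_of_mem (f := g) hc's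
      exact (List.nodup_cons.mp hnd2).1 this
    have hlen : C.card = mlist.length := by
      rw [hmlist, List.length_map, Finset.length_sort]
    rw [bdMon, map_sum]
    have hterm : ∀ j ∈ Finset.range C.card,
        Fm ((-1 : K) ^ j • eMon K ((C.sort (· ≤ ·)).eraseIdx j)) =
          (-1 : K) ^ j • wMon K (mlist.eraseIdx j) := by
      intro j _
      rw [map_smul, hFm_eMon, List.map_eraseIdx', hmlist]
    rw [Finset.sum_congr rfl hterm, hlen]
    have hcw := contract_wMon (K := K) d (l := mlist) ?_
    · rw [hm0, map_zero] at hcw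
      exact hcw.symm
    · intro w hw
      obtain ⟨a, _, rfl⟩ := List.mem_map.mp hw
      exact hd1 a
  -- descend to the quotient
  have hrel : ∀ ⦃x y : ExteriorAlgebra K (α → K)⦄, OSRel K M x y → Fm x = Fm y := by
    rintro x y ⟨⟨C, hC, rfl⟩, rfl⟩
    rw [hFbd C hC, map_zero]
  set L : OSAlg K M →ₐ[K] ExteriorAlgebra K (ℕ → K) :=
    RingQuot.liftAlgHom K ⟨Fm, hrel⟩ with hL
  have hLomega : L (omegaT K M T) = wMon K ((T.sort (· ≤ ·)).map g) := by
    rw [omegaT, hL, RingQuot.liftAlgHom_mkAlgHom_apply, eFin, hFm_eMon]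
  have hTsub : ∀ x ∈ T.sort (· ≤ ·), x ∈ lB := by
    intro x hx
    rw [hlB]
    exact List.mem_append_left _ hx
  have hnodupT : ((T.sort (· ≤ ·)).map ℓ).Nodup := by
    apply List.Nodup.map_on _ (Finset.sort_nodup _ _)
    intro x hx y hy hxy
    exact hℓinj x (hTsub x hx) y (hTsub y hy) hxy
  have hne0 : wMon K ((T.sort (· ≤ ·)).map g) ≠ 0 := by
    have : (T.sort (· ≤ ·)).map g =
        ((T.sort (· ≤ ·)).map ℓ).map (fun n => (Pi.single n 1 : ℕ → K)) := by
      rw [List.map_map]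
      rfl
    rw [this]
    exact wMon_single_ne_zero K _ hnodupT
  intro h0
  rw [h0, map_zero] at hLomega
  exact hne0 hLomega.symm

end Hard

/-- `T` is independent in a simple matroid iff `ω_T ≠ 0` in the Orlik–Solomon algebra. -/
theorem stmt_15 {α : Type*} [Fintype α] [LinearOrder α] (K : Type*) [Field K]
    (M : Matroid α) (hE : M.E = Set.univ) (hSimple : ∀ i j : α, M.Indep {i, j})
    (T : Finset α) : M.Indep ↑T ↔ omegaT K M T ≠ 0 := by
  constructor
  · exact fun h => omegaT_ne_zero_of_indep K M hE hSimple h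
  · intro h
    by_contra hni
    exact h (omegaT_eq_zero_of_dep K hE
      (Matroid.dep_iff.mpr ⟨hni, by rw [hE]; exact Set.subset_univ _⟩))
end

section
/- For a rank-r matroid M on {1,…,n}, the rank sequence of a permutation π with respect to the dual matroid M* is obtained from the rank sequence of the reversed permutation π^rev (defined by π^rev(j) = π(n+1−j)) with respect to M by interchanging 0's and 1's. That is, r_j(π; M*) = 1 − r_{n+1−j}(π^rev; M) for all j. -/
open scoped Classical

/-- The rank sequence of a permutation `π` with respect to a matroid `M`:
`r_j = rk{π(1),…,π(j)} − rk{π(1),…,π(j−1)}` (indices zero-based). -/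
noncomputable def rankSeq {n : ℕ} (M : Matroid (Fin n)) (π : Equiv.Perm (Fin n))
    (j : Fin n) : ℤ :=
  (M.mrk {x | ∃ i ≤ j, π i = x} : ℤ) - (M.mrk {x | ∃ i < j, π i = x} : ℤ)


lemma mrk_eq_ncard_of_basis {n : ℕ} {M : Matroid (Fin n)} (hE : M.E = Set.univ)
    {J X : Set (Fin n)} (hJ : M.IsBasis J X) : M.mrk X = J.ncard := by
  apply IsGreatest.csSup_eq
  constructor
  · exact ⟨J.toFinset, by simpa using hJ.indep, by simpa using hJ.subset,
      by rw [Set.ncard_eq_toFinset_card']⟩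
  · rintro m ⟨I, hI, hIX, rfl⟩
    obtain ⟨J', hJ', hIJ'⟩ := hI.subset_isBasis_of_subset hIX (by simp [hE])
    have h1 : (↑I : Set (Fin n)).ncard ≤ J'.ncard :=
      Set.ncard_le_ncard hIJ' (Set.toFinite _)
    have h2 : J'.ncard = J.ncard := by
      rw [Set.ncard_def, Set.ncard_def, hJ'.encard_eq_encard hJ]
    simpa [Set.ncard_coe_finset] using h1.trans_eq h2

lemma dual_mrk {n : ℕ} {M : Matroid (Fin n)} (hE : M.E = Set.univ) (X : Set (Fin n)) :
    (M✶.mrk X : ℤ) = X.ncard + M.mrk Xᶜ - M.mrk Set.univ := by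
  obtain ⟨I, hI⟩ := M.exists_isBasis Xᶜ (by simp [hE])
  obtain ⟨B, hB, rfl⟩ := hI.exists_isBase
  have hdual : M✶.IsBasis ((M.E \ B) ∩ (M.E \ Xᶜ)) (M.E \ Xᶜ) :=
    hB.compl_inter_isBasis_of_inter_isBasis hI
  rw [hE, ← Set.compl_eq_univ_diff, ← Set.compl_eq_univ_diff, compl_compl] at hdual
  have hrX : M✶.mrk X = (Bᶜ ∩ X).ncard :=
    mrk_eq_ncard_of_basis (by rw [Matroid.dual_ground, hE]) hdual
  have hrXc : M.mrk Xᶜ = (B ∩ Xᶜ).ncard := mrk_eq_ncard_of_basis hE hI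
  have hrE : M.mrk Set.univ = B.ncard :=
    mrk_eq_ncard_of_basis hE (hE ▸ hB.isBasis_ground)
  have hXcard : X.ncard = (B ∩ X).ncard + (Bᶜ ∩ X).ncard := by
    rw [← Set.ncard_union_eq
      (disjoint_compl_right.mono Set.inter_subset_left Set.inter_subset_left)
      (Set.toFinite _) (Set.toFinite _), ← Set.union_inter_distrib_right,
      Set.union_compl_self, Set.univ_inter]
  have hBcard : B.ncard = (B ∩ X).ncard + (B ∩ Xᶜ).ncard := by
    rw [← Set.ncard_union_eq
      (disjoint_compl_right.mono Set.inter_subset_right Set.inter_subset_right)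
      (Set.toFinite _) (Set.toFinite _), ← Set.inter_union_distrib_left,
      Set.union_compl_self, Set.inter_univ]
  rw [hrX, hrXc, hrE, hXcard, hBcard]
  push_cast
  ring

/-- The rank sequence of `π` in the dual matroid `M✶` is obtained from the rank
sequence of the reversed permutation in `M` by interchanging `0`'s and `1`'s. -/
theorem stmt_18 {n : ℕ} (M : Matroid (Fin n)) (hE : M.E = Set.univ)
    (π : Equiv.Perm (Fin n)) (j : Fin n) :
    rankSeq M✶ π j = 1 - rankSeq M (Fin.revPerm.trans π) j.rev := by
  have hle : ∀ i : Fin n, i ≤ j.rev ↔ j ≤ i.rev := by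
    intro i
    rw [← Fin.rev_le_rev, Fin.rev_rev]
  have hlt : ∀ i : Fin n, i < j.rev ↔ j < i.rev := by
    intro i
    rw [← Fin.rev_lt_rev, Fin.rev_rev]
  have hAc : {x | ∃ i ≤ j, π i = x}ᶜ = {x | ∃ i, j < i ∧ π i = x} := by
    ext x
    simp only [Set.mem_compl_iff, Set.mem_setOf_eq, not_exists, not_and]
    constructor
    · intro h
      exact ⟨π.symm x, lt_of_not_ge fun hle' => h (π.symm x) hle' (by simp), by simp⟩
    · rintro ⟨i, hi, rfl⟩ i' hi' he
      exact (not_le.mpr hi) (π.injective he ▸ hi')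
  have hA'c : {x | ∃ i < j, π i = x}ᶜ = {x | ∃ i, j ≤ i ∧ π i = x} := by
    ext x
    simp only [Set.mem_compl_iff, Set.mem_setOf_eq, not_exists, not_and]
    constructor
    · intro h
      exact ⟨π.symm x, le_of_not_gt fun hlt' => h (π.symm x) hlt' (by simp), by simp⟩
    · rintro ⟨i, hi, rfl⟩ i' hi' he
      exact (hi'.trans_le hi).ne (π.injective he)
  have hS1 : {x | ∃ i ≤ j.rev, (Fin.revPerm.trans π) i = x} = {x | ∃ i, j ≤ i ∧ π i = x} := by
    ext x
    simp only [Set.mem_setOf_eq, Equiv.trans_apply, Fin.revPerm_apply]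
    constructor
    · rintro ⟨i, hi, rfl⟩
      exact ⟨i.rev, (hle i).mp hi, rfl⟩
    · rintro ⟨i, hi, rfl⟩
      exact ⟨i.rev, (hle i.rev).mpr (by rwa [Fin.rev_rev]), by rw [Fin.rev_rev]⟩
  have hS2 : {x | ∃ i < j.rev, (Fin.revPerm.trans π) i = x} = {x | ∃ i, j < i ∧ π i = x} := by
    ext x
    simp only [Set.mem_setOf_eq, Equiv.trans_apply, Fin.revPerm_apply]
    constructor
    · rintro ⟨i, hi, rfl⟩
      exact ⟨i.rev, (hlt i).mp hi, rfl⟩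
    · rintro ⟨i, hi, rfl⟩
      exact ⟨i.rev, (hlt i.rev).mpr (by rwa [Fin.rev_rev]), by rw [Fin.rev_rev]⟩
  have hcard : ({x | ∃ i ≤ j, π i = x} : Set (Fin n)).ncard
      = ({x | ∃ i < j, π i = x} : Set (Fin n)).ncard + 1 := by
    have heq : {x | ∃ i ≤ j, π i = x} = insert (π j) {x | ∃ i < j, π i = x} := by
      ext x
      simp only [Set.mem_setOf_eq, Set.mem_insert_iff]
      constructor
      · rintro ⟨i, hi, rfl⟩
        rcases hi.lt_or_eq with h | rfl
        · exact Or.inr ⟨i, h, rfl⟩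
        · exact Or.inl rfl
      · rintro (rfl | ⟨i, hi, rfl⟩)
        · exact ⟨j, le_refl j, rfl⟩
        · exact ⟨i, hi.le, rfl⟩
    have hnm : π j ∉ {x | ∃ i < j, π i = x} := by
      rintro ⟨i, hi, he⟩
      exact hi.ne (π.injective he)
    rw [heq, Set.ncard_insert_of_notMem hnm (Set.toFinite _)]
  simp only [rankSeq]
  rw [dual_mrk hE, dual_mrk hE, hAc, hA'c, hS1, hS2, hcard]
  push_cast
  ring
end
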